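/- Let T be a maximal phylogenetic tree with d + n leaves, where d + n ≥ 5, and let k be the number of elementary splits of T. Then T admits a (d,n)-bicoloring if and only if k ≤ min(d, n), and in that case the number of (d,n)-bicolorings of T equals 2^k · C(d+n−2k, d−k), where C denotes the binomial coefficient. -/

import Mathlib

/-- The leaves of the split induced by the (internal) edge `{u, v}` on the side of `u`:
the leaves of `G` (vertices of degree 1) reachable from `u` after deleting the edge
`{u, v}`. -/
def splitLeaves {V : Type*} [Fintype V] (G : SimpleGraph V) [DecidableRel G.Adj]
    (u v : V) : Set V :=
  {w | G.degree w = 1 ∧ (G.deleteEdges {s(u, v)}).Reachable u w}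

/-- The set of internal edges of `G` inducing an elementary split, i.e. edges joining
two non-leaf vertices such that one of the two parts of the induced partition of the
leaves has exactly 2 elements. -/
def elementarySplitEdges {V : Type*} [Fintype V] (G : SimpleGraph V)
    [DecidableRel G.Adj] : Set (Sym2 V) :=
  {e | ∃ u v, e = s(u, v) ∧ G.Adj u v ∧ G.degree u ≠ 1 ∧ G.degree v ≠ 1 ∧
    ((splitLeaves G u v).ncard = 2 ∨ (splitLeaves G v u).ncard = 2)}

/-- A `(d,n)`-bicoloring of the leaves of `G`: a 2-coloring `c` of the leaves (`true` =
red, `false` = green) with exactly `d` red and `n` green leaves, such that for every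
internal edge both parts of the induced split contain leaves of both colors. -/
def IsBicoloring {V : Type*} [Fintype V] (G : SimpleGraph V) [DecidableRel G.Adj]
    (d n : ℕ) (c : {v : V // G.degree v = 1} → Bool) : Prop :=
  {l : {v : V // G.degree v = 1} | c l = true}.ncard = d ∧
  {l : {v : V // G.degree v = 1} | c l = false}.ncard = n ∧
  ∀ u v, G.Adj u v → G.degree u ≠ 1 → G.degree v ≠ 1 →
    (∃ l : {v : V // G.degree v = 1}, (l : V) ∈ splitLeaves G u v ∧ c l = true) ∧
    (∃ l : {v : V // G.degree v = 1}, (l : V) ∈ splitLeaves G u v ∧ c l = false) ∧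
    (∃ l : {v : V // G.degree v = 1}, (l : V) ∈ splitLeaves G v u ∧ c l = true) ∧
    (∃ l : {v : V // G.degree v = 1}, (l : V) ∈ splitLeaves G v u ∧ c l = false)


open SimpleGraph

section basics
variable {V : Type*} [DecidableEq V] {G : SimpleGraph V}
set_option linter.unusedSectionVars false

lemma bridge_aux (hacyc : G.IsAcyclic) {u v : V} (h : G.Adj u v) :
    ¬ (G.deleteEdges {s(u, v)}).Reachable u v :=
  fun hr => (isAcyclic_iff_forall_adj_isBridge.mp hacyc) h hr

lemma reach_or (hconn : G.Connected) {u v : V} (_h : G.Adj u v) (w : V) :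
    (G.deleteEdges {s(u, v)}).Reachable u w ∨ (G.deleteEdges {s(u, v)}).Reachable v w := by
  obtain ⟨p⟩ := hconn.preconnected u w
  set H := G.deleteEdges {s(u, v)} with hH
  suffices h : ∀ (a b : V) (_p : G.Walk a b), (H.Reachable u a ∨ H.Reachable v a) →
      (H.Reachable u b ∨ H.Reachable v b) by
    exact h u w p (Or.inl (Reachable.refl u))
  intro a b p
  induction p with
  | nil => exact id
  | @cons x y z hxy q ih =>
    intro hx
    apply ih
    by_cases he : s(x, y) = s(u, v)
    · rw [Sym2.eq_iff] at he
      rcases he with ⟨rfl, rfl⟩ | ⟨rfl, rfl⟩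
      · exact Or.inr (Reachable.refl _)
      · exact Or.inl (Reachable.refl _)
    · have hadj : H.Adj x y := by
        rw [hH, deleteEdges_adj]
        exact ⟨hxy, by simpa using he⟩
      rcases hx with h1 | h1
      · exact Or.inl (h1.trans hadj.reachable)
      · exact Or.inr (h1.trans hadj.reachable)

lemma not_both (hacyc : G.IsAcyclic) {u v : V} (h : G.Adj u v) (w : V) :
    ¬ ((G.deleteEdges {s(u, v)}).Reachable u w ∧ (G.deleteEdges {s(u, v)}).Reachable v w) := by
  rintro ⟨h1, h2⟩
  exact bridge_aux hacyc h (h1.trans h2.symm)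

lemma not_mem_support_aux (hacyc : G.IsAcyclic) {u x w : V} (h : G.Adj u x)
    (p : (G.deleteEdges {s(x, u)}).Walk x w) : u ∉ p.support := by
  intro hu
  exact bridge_aux hacyc h.symm ⟨p.takeUntil u hu⟩

lemma comp_subset (hacyc : G.IsAcyclic) {u x y w : V} (h : G.Adj u x) (hxy : x ≠ y)
    (hw : (G.deleteEdges {s(x, u)}).Reachable x w) :
    (G.deleteEdges {s(u, y)}).Reachable u w := by
  obtain ⟨p⟩ := hw
  have hu : u ∉ p.support := not_mem_support_aux hacyc h p
  have hq : ∀ e ∈ p.edges, e ∈ (G.deleteEdges {s(u, y)}).edgeSet := by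
    intro e he
    have heG : e ∈ (G.deleteEdges {s(x, u)}).edgeSet := p.edges_subset_edgeSet he
    rw [edgeSet_deleteEdges] at heG ⊢
    refine ⟨heG.1, ?_⟩
    intro hee
    rw [Set.mem_singleton_iff] at hee
    subst hee
    exact hu (p.fst_mem_support_of_mem_edges he)
  have hadj : (G.deleteEdges {s(u, y)}).Adj u x := by
    rw [deleteEdges_adj]
    refine ⟨h, ?_⟩
    simp only [Set.mem_singleton_iff, Sym2.eq_iff]
    rintro (⟨-, rfl⟩ | ⟨rfl, rfl⟩)
    · exact hxy rfl
    · exact hxy rfl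
  exact hadj.reachable.trans ⟨p.transfer _ hq⟩

lemma exists_step {u v w : V}
    (hw : (G.deleteEdges {s(u, v)}).Reachable u w) (hne : w ≠ u) :
    ∃ x, G.Adj u x ∧ x ≠ v ∧ (G.deleteEdges {s(x, u)}).Reachable x w := by
  obtain ⟨p⟩ := hw
  set q : (G.deleteEdges {s(u, v)}).Walk u w := ↑p.toPath with hq
  have hqp : q.IsPath := (p.toPath).2
  clear_value q
  clear hq
  cases q with
  | nil => exact absurd rfl hne
  | @cons _ x _ hadj q' =>
    have hx : G.Adj u x := (deleteEdges_adj.mp hadj).1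
    have hxv : x ≠ v := by
      rintro rfl
      exact (deleteEdges_adj.mp hadj).2 rfl
    have hq'path : q'.IsPath ∧ u ∉ q'.support := (Walk.cons_isPath_iff _ _).mp hqp
    refine ⟨x, hx, hxv, ?_⟩
    have hedges : ∀ e ∈ q'.edges, e ∈ (G.deleteEdges {s(x, u)}).edgeSet := by
      intro e he
      have heG := q'.edges_subset_edgeSet he
      rw [edgeSet_deleteEdges] at heG ⊢
      refine ⟨heG.1, ?_⟩
      intro hee
      rw [Set.mem_singleton_iff] at hee
      subst hee
      exact hq'path.2 (q'.snd_mem_support_of_mem_edges he)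
    exact ⟨q'.transfer _ hedges⟩

end basics

section split
variable {V : Type*} [Fintype V] [DecidableEq V] {G : SimpleGraph V} [DecidableRel G.Adj]
set_option linter.unusedSectionVars false

lemma mem_splitLeaves_iff {u v w : V} :
    w ∈ splitLeaves G u v ↔ G.degree w = 1 ∧ (G.deleteEdges {s(u, v)}).Reachable u w :=
  Iff.rfl

lemma splitLeaves_swap_edge (u v : V) :
    splitLeaves G v u = {w | G.degree w = 1 ∧ (G.deleteEdges {s(u, v)}).Reachable v w} := by
  unfold splitLeaves
  rw [Sym2.eq_swap]

lemma sl_subset (hacyc : G.IsAcyclic) {u x y : V} (h : G.Adj u x) (hxy : x ≠ y) :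
    splitLeaves G x u ⊆ splitLeaves G u y := by
  rintro w ⟨hdeg, hr⟩
  exact ⟨hdeg, comp_subset hacyc h hxy hr⟩

lemma leaf_mem_or (hconn : G.Connected) {u v : V} (h : G.Adj u v) {w : V}
    (hw : G.degree w = 1) : w ∈ splitLeaves G u v ∨ w ∈ splitLeaves G v u := by
  rw [mem_splitLeaves_iff, splitLeaves_swap_edge]
  rcases reach_or hconn h w with h1 | h1
  · exact Or.inl ⟨hw, h1⟩
  · exact Or.inr ⟨hw, h1⟩

lemma splitLeaves_disjoint (hacyc : G.IsAcyclic) {u v : V} (h : G.Adj u v) :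
    Disjoint (splitLeaves G u v) (splitLeaves G v u) := by
  rw [Set.disjoint_left]
  rintro w ⟨-, hr1⟩ hw2
  rw [splitLeaves_swap_edge] at hw2
  exact not_both hacyc h w ⟨hr1, hw2.2⟩

/-- if `u` is a leaf then its side consists of `u` alone -/
lemma splitLeaves_leaf {u v : V} (h : G.Adj u v) (hu : G.degree u = 1) :
    splitLeaves G u v = {u} := by
  ext w
  simp only [Set.mem_singleton_iff, mem_splitLeaves_iff]
  constructor
  · rintro ⟨hdeg, hr⟩
    by_contra hne
    obtain ⟨x, hux, hxv, -⟩ := exists_step hr hne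
    apply hxv
    have h1 : x ∈ G.neighborFinset u := by rwa [mem_neighborFinset]
    have h2 : v ∈ G.neighborFinset u := by rwa [mem_neighborFinset]
    have hcard : (G.neighborFinset u).card = 1 := hu
    obtain ⟨a, ha⟩ := Finset.card_eq_one.mp hcard
    rw [ha, Finset.mem_singleton] at h1 h2
    rw [h1, h2]
  · rintro rfl
    exact ⟨hu, Reachable.refl _⟩

/-- the three neighbours of an internal vertex -/
lemma exists_three_nbrs {u v : V} (h : G.Adj u v) (hu : G.degree u = 3) :
    ∃ a b, a ≠ b ∧ a ≠ v ∧ b ≠ v ∧ G.neighborFinset u = {v, a, b} := by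
  have hv : v ∈ G.neighborFinset u := by rwa [mem_neighborFinset]
  have hcard : (G.neighborFinset u).card = 3 := hu
  have h2 : ((G.neighborFinset u).erase v).card = 2 := by
    rw [Finset.card_erase_of_mem hv, hcard]
  obtain ⟨a, b, hab, hset⟩ := Finset.card_eq_two.mp h2
  have ha : a ≠ v ∧ a ∈ G.neighborFinset u := by
    have : a ∈ (G.neighborFinset u).erase v := by rw [hset]; simp
    exact ⟨Finset.ne_of_mem_erase this, Finset.mem_of_mem_erase this⟩
  have hb : b ≠ v ∧ b ∈ G.neighborFinset u := by
    have : b ∈ (G.neighborFinset u).erase v := by rw [hset]; simp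
    exact ⟨Finset.ne_of_mem_erase this, Finset.mem_of_mem_erase this⟩
  refine ⟨a, b, hab, ha.1, hb.1, ?_⟩
  have : G.neighborFinset u = insert v ((G.neighborFinset u).erase v) :=
    (Finset.insert_erase hv).symm
  rw [this, hset]

/-- decomposition of a side at an internal vertex -/
lemma splitLeaves_internal (hconn : G.Connected) (hacyc : G.IsAcyclic) {u v a b : V}
    (h : G.Adj u v) (hu3 : G.degree u = 3) (hab : a ≠ b) (hav : a ≠ v) (hbv : b ≠ v)
    (hnbr : G.neighborFinset u = {v, a, b}) :
    splitLeaves G u v = splitLeaves G a u ∪ splitLeaves G b u ∧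
      Disjoint (splitLeaves G a u) (splitLeaves G b u) := by
  have hua : G.Adj u a := by rw [← mem_neighborFinset, hnbr]; simp
  have hub : G.Adj u b := by rw [← mem_neighborFinset, hnbr]; simp
  constructor
  · apply Set.Subset.antisymm
    · rintro w ⟨hdeg, hr⟩
      have hwu : w ≠ u := by rintro rfl; rw [hdeg] at hu3; omega
      obtain ⟨x, hux, hxv, hrx⟩ := exists_step hr hwu
      have hx : x ∈ G.neighborFinset u := by rwa [mem_neighborFinset]
      rw [hnbr] at hx
      simp only [Finset.mem_insert, Finset.mem_singleton] at hx
      rcases hx with rfl | rfl | rfl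
      · exact absurd rfl hxv
      · exact Or.inl ⟨hdeg, hrx⟩
      · exact Or.inr ⟨hdeg, hrx⟩
    · rintro w (hw | hw)
      · exact sl_subset hacyc hua hav hw
      · exact sl_subset hacyc hub hbv hw
  · have h1 : splitLeaves G a u ⊆ splitLeaves G u b := sl_subset hacyc hua hab
    have h2 : Disjoint (splitLeaves G u b) (splitLeaves G b u) := splitLeaves_disjoint hacyc hub
    exact h2.mono_left h1

end split

section main
variable {V : Type*} [Fintype V] [DecidableEq V] {G : SimpleGraph V} [DecidableRel G.Adj]
set_option linter.unusedSectionVars false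

/-- the leaf neighbours of a vertex -/
def leafNbrs (G : SimpleGraph V) [DecidableRel G.Adj] (p : V) : Finset V :=
  (G.neighborFinset p).filter (fun x => G.degree x = 1)

/-- `p` is the parent of a cherry -/
def IsCP (G : SimpleGraph V) [DecidableRel G.Adj] (p : V) : Prop :=
  G.degree p ≠ 1 ∧ (leafNbrs G p).card = 2

/-- in a large tree, no vertex is adjacent only to leaves -/
lemma no_star (hconn : G.Connected) (hdeg : ∀ v, G.degree v = 1 ∨ G.degree v = 3)
    (hbig : 5 ≤ {v : V | G.degree v = 1}.ncard) (u : V)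
    (hall : ∀ x, G.Adj u x → G.degree x = 1) : False := by
  have key : ∀ (w z : V) (_p : G.Walk w z), (∀ x, G.Adj z x → G.degree x = 1) →
      w = z ∨ G.Adj z w := by
    intro w z p
    induction p with
    | nil => exact fun _ => Or.inl rfl
    | @cons x y z hxy q ih =>
      intro hall'
      rcases ih hall' with rfl | hy
      · exact Or.inr hxy.symm
      · have hy1 : G.degree y = 1 := hall' y hy
        have hcard : (G.neighborFinset y).card = 1 := hy1
        obtain ⟨a, ha⟩ := Finset.card_eq_one.mp hcard
        have hxa : x ∈ G.neighborFinset y := by rw [mem_neighborFinset]; exact hxy.symm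
        have hua : z ∈ G.neighborFinset y := by rw [mem_neighborFinset]; exact hy.symm
        rw [ha, Finset.mem_singleton] at hxa hua
        exact Or.inl (hxa.trans hua.symm)
  have hsub : {v : V | G.degree v = 1} ⊆ insert u ↑(G.neighborFinset u) := by
    intro w hw
    obtain ⟨p⟩ := hconn.preconnected w u
    rcases key w u p hall with rfl | h
    · exact Set.mem_insert _ _
    · exact Set.mem_insert_of_mem _ (by rwa [Finset.mem_coe, mem_neighborFinset])
  have hle := Set.ncard_le_ncard hsub (Set.toFinite _)
  have : (insert u ↑(G.neighborFinset u) : Set V).ncard ≤ (G.neighborFinset u).card + 1 := by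
    refine le_trans (Set.ncard_insert_le _ _) ?_
    rw [Set.ncard_coe_finset]
  have hdu : (G.neighborFinset u).card ≤ 3 := by
    have := hdeg u
    unfold SimpleGraph.degree at this
    omega
  omega

end main

section core
variable {V : Type*} [Fintype V] [DecidableEq V] {G : SimpleGraph V} [DecidableRel G.Adj]
set_option linter.unusedSectionVars false
variable (hconn : G.Connected) (hacyc : G.IsAcyclic)
  (hdeg : ∀ v, G.degree v = 1 ∨ G.degree v = 3)
  (hbig : 5 ≤ {v : V | G.degree v = 1}.ncard)
include hconn hacyc hdeg hbig

lemma main_core : ∀ (N : ℕ) (u v : V),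
    {w : V | (G.deleteEdges {s(u, v)}).Reachable u w}.ncard ≤ N → G.Adj u v →
    ((splitLeaves G u v).Nonempty ∧
     (G.degree u ≠ 1 → 2 ≤ (splitLeaves G u v).ncard) ∧
     (G.degree u ≠ 1 →
       ((splitLeaves G u v).ncard = 2 ↔ ∀ x, G.Adj u x → x ≠ v → G.degree x = 1)) ∧
     (G.degree u ≠ 1 → ∃ p, IsCP G p ∧ ↑(leafNbrs G p) ⊆ splitLeaves G u v)) := by
  intro N
  induction N with
  | zero =>
    intro u v hle _
    exfalso
    have : u ∈ {w : V | (G.deleteEdges {s(u, v)}).Reachable u w} := Reachable.refl u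
    have h0 := (Set.ncard_pos (Set.toFinite _)).mpr ⟨u, this⟩
    omega
  | succ N ih =>
    intro u v hle huv
    by_cases hu1 : G.degree u = 1
    · -- leaf case
      rw [splitLeaves_leaf huv hu1]
      refine ⟨⟨u, rfl⟩, fun h => absurd hu1 h, fun h => absurd hu1 h, fun h => absurd hu1 h⟩
    · have hu3 : G.degree u = 3 := (hdeg u).resolve_left hu1
      obtain ⟨a, b, hab, hav, hbv, hnbr⟩ := exists_three_nbrs huv hu3
      have hua : G.Adj u a := by rw [← mem_neighborFinset, hnbr]; simp
      have hub : G.Adj u b := by rw [← mem_neighborFinset, hnbr]; simp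
      obtain ⟨hunion, hdisj⟩ := splitLeaves_internal hconn hacyc huv hu3 hab hav hbv hnbr
      -- measure decrease for edges (a,u) and (b,u)
      have hmeas : ∀ x, G.Adj u x → x ≠ v →
          {w : V | (G.deleteEdges {s(x, u)}).Reachable x w}.ncard ≤ N := by
        intro x hux hxv
        have hsub : {w : V | (G.deleteEdges {s(x, u)}).Reachable x w} ⊆
            {w : V | (G.deleteEdges {s(u, v)}).Reachable u w} := by
          intro w hw
          exact comp_subset hacyc hux hxv hw
        have hu_not : u ∉ {w : V | (G.deleteEdges {s(x, u)}).Reachable x w} := by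
          intro hmem
          exact bridge_aux hacyc hux.symm hmem
        have hu_in : u ∈ {w : V | (G.deleteEdges {s(u, v)}).Reachable u w} := Reachable.refl u
        have hss : {w : V | (G.deleteEdges {s(x, u)}).Reachable x w} ⊂
            {w : V | (G.deleteEdges {s(u, v)}).Reachable u w} :=
          ⟨hsub, fun hsup => hu_not (hsup hu_in)⟩
        have := Set.ncard_lt_ncard hss (Set.toFinite _)
        omega
      have hau : G.Adj a u := hua.symm
      have hbu : G.Adj b u := hub.symm
      obtain ⟨hane, ha2, ha2iff, hacherry⟩ := ih a u (hmeas a hua hav) hau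
      obtain ⟨hbne, hb2, hb2iff, hbcherry⟩ := ih b u (hmeas b hub hbv) hbu
      have hcard : (splitLeaves G u v).ncard =
          (splitLeaves G a u).ncard + (splitLeaves G b u).ncard := by
        rw [hunion, Set.ncard_union_eq hdisj (Set.toFinite _) (Set.toFinite _)]
      have ha1 : 1 ≤ (splitLeaves G a u).ncard := (Set.ncard_pos (Set.toFinite _)).mpr hane
      have hb1 : 1 ≤ (splitLeaves G b u).ncard := (Set.ncard_pos (Set.toFinite _)).mpr hbne
      refine ⟨?_, ?_, ?_, ?_⟩
      · obtain ⟨w, hw⟩ := hane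
        exact ⟨w, hunion ▸ Or.inl hw⟩
      · intro _
        omega
      · intro _
        constructor
        · intro h2
          -- both sides have exactly one leaf, so a and b are leaves
          have hda : G.degree a = 1 := by
            by_contra hda
            have := ha2 hda
            omega
          have hdb : G.degree b = 1 := by
            by_contra hdb
            have := hb2 hdb
            omega
          intro x hux hxv
          have : x ∈ G.neighborFinset u := by rwa [mem_neighborFinset]
          rw [hnbr] at this
          simp only [Finset.mem_insert, Finset.mem_singleton] at this
          rcases this with rfl | rfl | rfl
          · exact absurd rfl hxv
          · exact hda
          · exact hdb
        · intro hall
          have hda : G.degree a = 1 := hall a hua hav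
          have hdb : G.degree b = 1 := hall b hub hbv
          rw [hcard, splitLeaves_leaf hau hda, splitLeaves_leaf hbu hdb]
          simp
      · intro _
        by_cases hda : G.degree a = 1
        · by_cases hdb : G.degree b = 1
          · -- u is itself a cherry parent
            have hdv : G.degree v ≠ 1 := by
              intro hdv
              apply no_star hconn hdeg hbig u
              intro x hux
              have : x ∈ G.neighborFinset u := by rwa [mem_neighborFinset]
              rw [hnbr] at this
              simp only [Finset.mem_insert, Finset.mem_singleton] at this
              rcases this with rfl | rfl | rfl
              · exact hdv
              · exact hda
              · exact hdb
            refine ⟨u, ⟨hu1, ?_⟩, ?_⟩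
            · have : leafNbrs G u = {a, b} := by
                unfold leafNbrs
                rw [hnbr]
                ext x
                simp only [Finset.mem_filter, Finset.mem_insert, Finset.mem_singleton]
                constructor
                · rintro ⟨rfl | rfl | rfl, hx⟩
                  · exact absurd hx hdv
                  · exact Or.inl rfl
                  · exact Or.inr rfl
                · rintro (rfl | rfl)
                  · exact ⟨Or.inr (Or.inl rfl), hda⟩
                  · exact ⟨Or.inr (Or.inr rfl), hdb⟩
              rw [this, Finset.card_insert_of_notMem (by simpa using hab), Finset.card_singleton]
            · intro x hx
              unfold leafNbrs at hx
              rw [hnbr] at hx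
              simp only [Finset.coe_filter, Finset.mem_insert, Finset.mem_singleton,
                Set.mem_setOf_eq] at hx
              obtain ⟨hmem, hxleaf⟩ := hx
              rcases hmem with rfl | rfl | rfl
              · exact absurd hxleaf hdv
              · exact hunion ▸ Or.inl ((splitLeaves_leaf hau hda) ▸ rfl)
              · exact hunion ▸ Or.inr ((splitLeaves_leaf hbu hdb) ▸ rfl)
          · obtain ⟨p, hp, hsub⟩ := hbcherry hdb
            exact ⟨p, hp, hsub.trans (by rw [hunion]; exact Set.subset_union_right)⟩
        · obtain ⟨p, hp, hsub⟩ := hacherry hda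
          exact ⟨p, hp, hsub.trans (by rw [hunion]; exact Set.subset_union_left)⟩

end core

section stage4
variable {V : Type*} [Fintype V] [DecidableEq V] {G : SimpleGraph V} [DecidableRel G.Adj]
set_option linter.unusedSectionVars false

noncomputable def thirdNbr (G : SimpleGraph V) [DecidableRel G.Adj] (p : V) : V :=
  if h : ((G.neighborFinset p) \ leafNbrs G p).Nonempty then h.choose else p

variable (hconn : G.Connected) (hacyc : G.IsAcyclic)
  (hdeg : ∀ v, G.degree v = 1 ∨ G.degree v = 3)
  (hbig : 5 ≤ {v : V | G.degree v = 1}.ncard)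
include hconn hacyc hdeg hbig

lemma leafNbrs_subset (p : V) : leafNbrs G p ⊆ G.neighborFinset p := Finset.filter_subset _ _

lemma thirdNbr_spec {p : V} (hp : IsCP G p) :
    G.Adj p (thirdNbr G p) ∧ G.degree (thirdNbr G p) ≠ 1 ∧
    (G.neighborFinset p) \ leafNbrs G p = {thirdNbr G p} ∧
    (∀ x, G.Adj p x → G.degree x ≠ 1 → x = thirdNbr G p) := by
  obtain ⟨hp1, hp2⟩ := hp
  have hp3 : G.degree p = 3 := (hdeg p).resolve_left hp1
  have hcard : ((G.neighborFinset p) \ leafNbrs G p).card = 1 := by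
    rw [Finset.card_sdiff_of_subset (leafNbrs_subset hconn hacyc hdeg hbig p), hp2]
    rw [show (G.neighborFinset p).card = 3 from hp3]
  have hne : ((G.neighborFinset p) \ leafNbrs G p).Nonempty :=
    Finset.card_pos.mp (by omega)
  have ht : thirdNbr G p = hne.choose := by
    unfold thirdNbr
    rw [dif_pos hne]
  have htmem : thirdNbr G p ∈ (G.neighborFinset p) \ leafNbrs G p := ht ▸ hne.choose_spec
  have hsingle : (G.neighborFinset p) \ leafNbrs G p = {thirdNbr G p} := by
    apply Finset.eq_singleton_iff_unique_mem.mpr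
    refine ⟨htmem, fun x hx => ?_⟩
    obtain ⟨y, hy⟩ := Finset.card_eq_one.mp hcard
    rw [hy, Finset.mem_singleton] at hx htmem
    rw [hx, htmem]
  have hmem := Finset.mem_sdiff.mp htmem
  refine ⟨(mem_neighborFinset _ _ _).mp hmem.1, ?_, hsingle, ?_⟩
  · intro hleaf
    exact hmem.2 (Finset.mem_filter.mpr ⟨hmem.1, hleaf⟩)
  · intro x hpx hx1
    have : x ∈ (G.neighborFinset p) \ leafNbrs G p := by
      rw [Finset.mem_sdiff]
      refine ⟨(mem_neighborFinset _ _ _).mpr hpx, ?_⟩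
      intro hmem'
      exact hx1 (Finset.mem_filter.mp hmem').2
    rwa [hsingle, Finset.mem_singleton] at this

lemma isCP_splitLeaves {p : V} (hp : IsCP G p) :
    splitLeaves G p (thirdNbr G p) = ↑(leafNbrs G p) ∧
    (splitLeaves G p (thirdNbr G p)).ncard = 2 := by
  obtain ⟨hadjp, ht1, hsingle, huniq⟩ := thirdNbr_spec hconn hacyc hdeg hbig hp
  have hsub : ↑(leafNbrs G p) ⊆ splitLeaves G p (thirdNbr G p) := by
    intro l hl
    rw [Finset.mem_coe] at hl
    have hmem := Finset.mem_filter.mp hl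
    have hpl : G.Adj p l := (mem_neighborFinset _ _ _).mp hmem.1
    refine ⟨hmem.2, ?_⟩
    have : (G.deleteEdges {s(p, thirdNbr G p)}).Adj p l := by
      rw [SimpleGraph.deleteEdges_adj]
      refine ⟨hpl, ?_⟩
      simp only [Set.mem_singleton_iff, Sym2.eq_iff]
      rintro (⟨-, rfl⟩ | ⟨-, rfl⟩)
      · exact ht1 hmem.2
      · exact hp.1 hmem.2
    exact this.reachable
  have hcard2 : (splitLeaves G p (thirdNbr G p)).ncard = 2 := by
    obtain ⟨-, -, hiff, -⟩ := main_core hconn hacyc hdeg hbig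
      {w : V | (G.deleteEdges {s(p, thirdNbr G p)}).Reachable p w}.ncard p (thirdNbr G p)
      le_rfl hadjp
    rw [hiff hp.1]
    intro x hpx hxt
    by_contra hx1
    exact hxt (huniq x hpx hx1)
  refine ⟨Set.Subset.antisymm ?_ hsub, hcard2⟩
  apply Set.eq_of_subset_of_ncard_le hsub ?_ (Set.toFinite _) |>.ge
  rw [hcard2, Set.ncard_coe_finset, hp.2]

lemma split_total {u v : V} (huv : G.Adj u v) :
    (splitLeaves G u v).ncard + (splitLeaves G v u).ncard = {v : V | G.degree v = 1}.ncard := by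
  rw [← Set.ncard_union_eq (splitLeaves_disjoint hacyc huv) (Set.toFinite _) (Set.toFinite _)]
  congr 1
  apply Set.Subset.antisymm
  · rintro w (hw | hw)
    · exact hw.1
    · exact hw.1
  · intro w hw
    exact leaf_mem_or hconn huv hw

lemma elem_eq_image :
    elementarySplitEdges G = (fun p => s(p, thirdNbr G p)) '' {p : V | IsCP G p} := by
  apply Set.Subset.antisymm
  · rintro e ⟨u, v, rfl, huv, hu1, hv1, hor⟩
    have key : ∀ u' v' : V, G.Adj u' v' → G.degree u' ≠ 1 → G.degree v' ≠ 1 →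
        (splitLeaves G u' v').ncard = 2 →
        s(u', v') ∈ (fun p => s(p, thirdNbr G p)) '' {p : V | IsCP G p} := by
      intro u' v' huv' hu1' hv1' h2
      obtain ⟨-, -, hiff, -⟩ := main_core hconn hacyc hdeg hbig
        {w : V | (G.deleteEdges {s(u', v')}).Reachable u' w}.ncard u' v' le_rfl huv'
      have hall := (hiff hu1').mp h2
      have hu3 : G.degree u' = 3 := (hdeg u').resolve_left hu1'
      obtain ⟨a, b, hab, hav, hbv, hnbr⟩ := exists_three_nbrs huv' hu3
      have hua' : G.Adj u' a := by rw [← mem_neighborFinset, hnbr]; simp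
      have hub' : G.Adj u' b := by rw [← mem_neighborFinset, hnbr]; simp
      have hda : G.degree a = 1 := hall a hua' hav
      have hdb : G.degree b = 1 := hall b hub' hbv
      have hcp : IsCP G u' := by
        refine ⟨hu1', ?_⟩
        have heq : leafNbrs G u' = {a, b} := by
          unfold leafNbrs
          rw [hnbr]
          ext x
          simp only [Finset.mem_filter, Finset.mem_insert, Finset.mem_singleton]
          constructor
          · rintro ⟨rfl | h | h, hx⟩
            · exact absurd hx hv1'
            · exact Or.inl h
            · exact Or.inr h
          · rintro (h | h)
            · exact ⟨Or.inr (Or.inl h), h ▸ hda⟩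
            · exact ⟨Or.inr (Or.inr h), h ▸ hdb⟩
        rw [heq, Finset.card_insert_of_notMem (by simpa using hab), Finset.card_singleton]
      obtain ⟨-, -, -, huniq⟩ := thirdNbr_spec hconn hacyc hdeg hbig hcp
      have : v' = thirdNbr G u' := huniq v' huv' hv1'
      refine ⟨u', hcp, ?_⟩
      show s(u', thirdNbr G u') = s(u', v')
      rw [← this]
    rcases hor with h2 | h2
    · exact key u v huv hu1 hv1 h2
    · rw [Sym2.eq_swap]
      exact key v u huv.symm hv1 hu1 h2
  · rintro e ⟨p, hp, rfl⟩
    obtain ⟨hadjp, ht1, -, -⟩ := thirdNbr_spec hconn hacyc hdeg hbig hp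
    exact ⟨p, thirdNbr G p, rfl, hadjp, hp.1, ht1,
      Or.inl (isCP_splitLeaves hconn hacyc hdeg hbig hp).2⟩

lemma thirdNbr_injOn : Set.InjOn (fun p => s(p, thirdNbr G p)) {p : V | IsCP G p} := by
  intro p hp q hq heq
  simp only [Sym2.eq_iff] at heq
  rcases heq with ⟨h1, -⟩ | ⟨h1, h2⟩
  · exact h1
  · exfalso
    obtain ⟨hadjpq, -, -, -⟩ := thirdNbr_spec hconn hacyc hdeg hbig hq
    rw [← h1] at hadjpq
    have hq2 : (splitLeaves G q p).ncard = 2 := by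
      have := (isCP_splitLeaves hconn hacyc hdeg hbig hq).2
      rwa [← h1] at this
    have hp2 : (splitLeaves G p q).ncard = 2 := by
      have := (isCP_splitLeaves hconn hacyc hdeg hbig hp).2
      rwa [h2] at this
    have htot := split_total hconn hacyc hdeg hbig hadjpq.symm
    rw [hp2, hq2] at htot
    omega

lemma ncard_CP_eq :
    {p : V | IsCP G p}.ncard = (elementarySplitEdges G).ncard := by
  rw [elem_eq_image hconn hacyc hdeg hbig,
    Set.ncard_image_of_injOn (thirdNbr_injOn hconn hacyc hdeg hbig)]

end stage4

section stage5
variable {V : Type*} [Fintype V] [DecidableEq V] {G : SimpleGraph V} [DecidableRel G.Adj]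
set_option linter.unusedSectionVars false

noncomputable def par (G : SimpleGraph V) [DecidableRel G.Adj] (l : V) : V :=
  if h : (G.neighborFinset l).Nonempty then h.choose else l

noncomputable def pick (G : SimpleGraph V) [DecidableRel G.Adj] (p : V) : V :=
  if h : (leafNbrs G p).Nonempty then h.choose else p

noncomputable def pick2 (G : SimpleGraph V) [DecidableRel G.Adj] (p : V) : V :=
  if h : ((leafNbrs G p).erase (pick G p)).Nonempty then h.choose else p

instance : DecidablePred (IsCP G) := fun p => by unfold IsCP; infer_instance

lemma par_spec {l : V} (hl : G.degree l = 1) :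
    G.Adj l (par G l) ∧ ∀ x, G.Adj l x → x = par G l := by
  have hcard : (G.neighborFinset l).card = 1 := hl
  have hne : (G.neighborFinset l).Nonempty := Finset.card_pos.mp (by omega)
  have hp : par G l = hne.choose := by unfold par; rw [dif_pos hne]
  have hmem : par G l ∈ G.neighborFinset l := hp ▸ hne.choose_spec
  obtain ⟨y, hy⟩ := Finset.card_eq_one.mp hcard
  refine ⟨(mem_neighborFinset _ _ _).mp hmem, fun x hx => ?_⟩
  have hx' : x ∈ G.neighborFinset l := (mem_neighborFinset _ _ _).mpr hx
  rw [hy, Finset.mem_singleton] at hx' hmem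
  rw [hx', hmem]

lemma mem_leafNbrs_iff_par {l : V} (hl : G.degree l = 1) (p : V) :
    l ∈ leafNbrs G p ↔ p = par G l := by
  obtain ⟨hadjl, huniq⟩ := par_spec hl
  constructor
  · intro h
    have := (Finset.mem_filter.mp h).1
    exact huniq p ((mem_neighborFinset _ _ _).mp this).symm
  · rintro rfl
    exact Finset.mem_filter.mpr ⟨(mem_neighborFinset _ _ _).mpr hadjl.symm, hl⟩

lemma pick_spec {p : V} (hp : IsCP G p) :
    leafNbrs G p = {pick G p, pick2 G p} ∧ pick G p ≠ pick2 G p := by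
  have hcard := hp.2
  have hne : (leafNbrs G p).Nonempty := Finset.card_pos.mp (by omega)
  have hp1 : pick G p = hne.choose := by unfold pick; rw [dif_pos hne]
  have hmem1 : pick G p ∈ leafNbrs G p := hp1 ▸ hne.choose_spec
  have hcard' : ((leafNbrs G p).erase (pick G p)).card = 1 := by
    rw [Finset.card_erase_of_mem hmem1, hcard]
  have hne2 : ((leafNbrs G p).erase (pick G p)).Nonempty := Finset.card_pos.mp (by omega)
  have hp2 : pick2 G p = hne2.choose := by unfold pick2; rw [dif_pos hne2]
  have hmem2 : pick2 G p ∈ (leafNbrs G p).erase (pick G p) := hp2 ▸ hne2.choose_spec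
  have hneq : pick G p ≠ pick2 G p := (Finset.ne_of_mem_erase hmem2).symm
  refine ⟨?_, hneq⟩
  refine (Finset.eq_of_subset_of_card_le ?_ ?_).symm
  · intro x hx
    rcases Finset.mem_insert.mp hx with rfl | hx'
    · exact hmem1
    · rw [Finset.mem_singleton] at hx'
      exact hx' ▸ Finset.mem_of_mem_erase hmem2
  · rw [hcard, Finset.card_insert_of_notMem (by simpa using hneq), Finset.card_singleton]

lemma pick_leaf {p : V} (hp : IsCP G p) :
    G.degree (pick G p) = 1 ∧ G.degree (pick2 G p) = 1 := by
  obtain ⟨heq, -⟩ := pick_spec hp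
  constructor
  · have : pick G p ∈ leafNbrs G p := heq ▸ by simp
    exact (Finset.mem_filter.mp this).2
  · have : pick2 G p ∈ leafNbrs G p := heq ▸ by simp
    exact (Finset.mem_filter.mp this).2

lemma par_pick {p : V} (hp : IsCP G p) :
    par G (pick G p) = p ∧ par G (pick2 G p) = p := by
  obtain ⟨heq, -⟩ := pick_spec hp
  obtain ⟨h1, h2⟩ := pick_leaf hp
  constructor
  · exact ((mem_leafNbrs_iff_par h1 p).mp (heq ▸ by simp)).symm
  · exact ((mem_leafNbrs_iff_par h2 p).mp (heq ▸ by simp)).symm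

variable (hconn : G.Connected) (hacyc : G.IsAcyclic)
  (hdeg : ∀ v, G.degree v = 1 ∨ G.degree v = 3)
  (hbig : 5 ≤ {v : V | G.degree v = 1}.ncard)
include hconn hacyc hdeg hbig

/-- reduction: the split condition is equivalent to every cherry being bicolored -/
lemma cond_iff (c : {v : V // G.degree v = 1} → Bool) :
    (∀ u v, G.Adj u v → G.degree u ≠ 1 → G.degree v ≠ 1 →
      (∃ l : {v : V // G.degree v = 1}, (l : V) ∈ splitLeaves G u v ∧ c l = true) ∧
      (∃ l : {v : V // G.degree v = 1}, (l : V) ∈ splitLeaves G u v ∧ c l = false) ∧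
      (∃ l : {v : V // G.degree v = 1}, (l : V) ∈ splitLeaves G v u ∧ c l = true) ∧
      (∃ l : {v : V // G.degree v = 1}, (l : V) ∈ splitLeaves G v u ∧ c l = false)) ↔
    (∀ p, IsCP G p →
      (∃ l : {v : V // G.degree v = 1}, (l : V) ∈ leafNbrs G p ∧ c l = true) ∧
      (∃ l : {v : V // G.degree v = 1}, (l : V) ∈ leafNbrs G p ∧ c l = false)) := by
  constructor
  · intro h p hp
    obtain ⟨hadjp, ht1, -, -⟩ := thirdNbr_spec hconn hacyc hdeg hbig hp
    obtain ⟨h1, h2, -, -⟩ := h p (thirdNbr G p) hadjp hp.1 ht1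
    obtain ⟨hSeq, -⟩ := isCP_splitLeaves hconn hacyc hdeg hbig hp
    rw [hSeq] at h1 h2
    exact ⟨h1, h2⟩
  · intro h u v huv hu1 hv1
    have get : ∀ u' v' : V, G.Adj u' v' → G.degree u' ≠ 1 →
        (∃ l : {v : V // G.degree v = 1}, (l : V) ∈ splitLeaves G u' v' ∧ c l = true) ∧
        (∃ l : {v : V // G.degree v = 1}, (l : V) ∈ splitLeaves G u' v' ∧ c l = false) := by
      intro u' v' huv' hu1'
      obtain ⟨-, -, -, hch⟩ := main_core hconn hacyc hdeg hbig
        {w : V | (G.deleteEdges {s(u', v')}).Reachable u' w}.ncard u' v' le_rfl huv'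
      obtain ⟨p, hp, hsub⟩ := hch hu1'
      obtain ⟨⟨l1, hl1, hc1⟩, ⟨l2, hl2, hc2⟩⟩ := h p hp
      exact ⟨⟨l1, hsub hl1, hc1⟩, ⟨l2, hsub hl2, hc2⟩⟩
    obtain ⟨a1, a2⟩ := get u v huv hu1
    obtain ⟨b1, b2⟩ := get v u huv.symm hv1
    exact ⟨a1, a2, b1, b2⟩

end stage5

section count
variable {V : Type*} [Fintype V] [DecidableEq V] {G : SimpleGraph V} [DecidableRel G.Adj]
set_option linter.unusedSectionVars false

/-- cherry parents as a finset -/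
def PF (G : SimpleGraph V) [DecidableRel G.Adj] : Finset V := Finset.univ.filter (IsCP G)

/-- the two leaves of the cherry at `p`, as elements of the leaf subtype -/
def pairLf (G : SimpleGraph V) [DecidableRel G.Adj] (p : V) :
    Finset {v : V // G.degree v = 1} :=
  Finset.univ.filter (fun l => (l : V) ∈ leafNbrs G p)

noncomputable def cherryLfF (G : SimpleGraph V) [DecidableRel G.Adj] :
    Finset {v : V // G.degree v = 1} :=
  Finset.univ.filter (fun l => IsCP G (par G (l : V)))

noncomputable def freeLfF (G : SimpleGraph V) [DecidableRel G.Adj] :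
    Finset {v : V // G.degree v = 1} :=
  Finset.univ.filter (fun l => ¬ IsCP G (par G (l : V)))

/-- every cherry is bicolored -/
def goodC (G : SimpleGraph V) [DecidableRel G.Adj]
    (c : {v : V // G.degree v = 1} → Bool) : Prop :=
  ∀ p, IsCP G p →
    (∃ l : {v : V // G.degree v = 1}, (l : V) ∈ leafNbrs G p ∧ c l = true) ∧
    (∃ l : {v : V // G.degree v = 1}, (l : V) ∈ leafNbrs G p ∧ c l = false)

instance : DecidablePred (goodC G) := fun c => by unfold goodC; infer_instance

lemma mem_PF {p : V} : p ∈ PF G ↔ IsCP G p := by simp [PF]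

lemma pairLf_eq {p : V} (hp : IsCP G p) :
    pairLf G p = {⟨pick G p, (pick_leaf hp).1⟩, ⟨pick2 G p, (pick_leaf hp).2⟩} := by
  ext l
  simp only [pairLf, Finset.mem_filter, Finset.mem_univ, true_and, (pick_spec hp).1,
    Finset.mem_insert, Finset.mem_singleton, Subtype.ext_iff]

lemma pairLf_card {p : V} (hp : IsCP G p) : (pairLf G p).card = 2 := by
  rw [pairLf_eq hp]
  rw [Finset.card_insert_of_notMem, Finset.card_singleton]
  simp only [Finset.mem_singleton, Subtype.ext_iff]
  exact (pick_spec hp).2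

lemma mem_pairLf {p : V} {l : {v : V // G.degree v = 1}} :
    l ∈ pairLf G p ↔ (l : V) ∈ leafNbrs G p := by simp [pairLf]

lemma cherry_eq_biUnion : cherryLfF G = (PF G).biUnion (pairLf G) := by
  ext l
  simp only [cherryLfF, Finset.mem_filter, Finset.mem_univ, true_and, Finset.mem_biUnion,
    mem_PF, mem_pairLf]
  constructor
  · intro h
    exact ⟨par G (l : V), h, (mem_leafNbrs_iff_par l.2 _).mpr rfl⟩
  · rintro ⟨p, hp, hmem⟩
    rwa [(mem_leafNbrs_iff_par l.2 p).mp hmem] at hp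
    
lemma pairLf_disjoint {p q : V} (hpq : p ≠ q) : Disjoint (pairLf G p) (pairLf G q) := by
  rw [Finset.disjoint_left]
  intro l hlp hlq
  rw [mem_pairLf, mem_leafNbrs_iff_par l.2] at hlp hlq
  exact hpq (hlp.trans hlq.symm)

lemma cherry_card : (cherryLfF G).card = 2 * (PF G).card := by
  rw [cherry_eq_biUnion, Finset.card_biUnion (fun p _ q _ h => pairLf_disjoint h)]
  rw [Finset.sum_congr rfl (fun p hp => pairLf_card (mem_PF.mp hp))]
  simp [mul_comm]

lemma good_ne {c : {v : V // G.degree v = 1} → Bool} (hg : goodC G c) {p : V}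
    (hp : IsCP G p) :
    c ⟨pick G p, (pick_leaf hp).1⟩ ≠ c ⟨pick2 G p, (pick_leaf hp).2⟩ := by
  obtain ⟨⟨l1, hl1, hc1⟩, ⟨l2, hl2, hc2⟩⟩ := hg p hp
  have h1 : l1 = ⟨pick G p, (pick_leaf hp).1⟩ ∨ l1 = ⟨pick2 G p, (pick_leaf hp).2⟩ := by
    rw [(pick_spec hp).1] at hl1
    simp only [Finset.mem_insert, Finset.mem_singleton] at hl1
    rcases hl1 with h | h
    · exact Or.inl (Subtype.ext h)
    · exact Or.inr (Subtype.ext h)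
  have h2 : l2 = ⟨pick G p, (pick_leaf hp).1⟩ ∨ l2 = ⟨pick2 G p, (pick_leaf hp).2⟩ := by
    rw [(pick_spec hp).1] at hl2
    simp only [Finset.mem_insert, Finset.mem_singleton] at hl2
    rcases hl2 with h | h
    · exact Or.inl (Subtype.ext h)
    · exact Or.inr (Subtype.ext h)
  rcases h1 with rfl | rfl <;> rcases h2 with rfl | rfl <;> simp_all

lemma pairLf_filter_card {c : {v : V // G.degree v = 1} → Bool} (hg : goodC G c) {p : V}
    (hp : IsCP G p) (b : Bool) :
    ((pairLf G p).filter (fun l => c l = b)).card = 1 := by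
  have hne := good_ne hg hp
  have hd : (⟨pick G p, (pick_leaf hp).1⟩ : {v : V // G.degree v = 1}) ≠
      ⟨pick2 G p, (pick_leaf hp).2⟩ := by
    simp only [ne_eq, Subtype.ext_iff]
    exact (pick_spec hp).2
  rw [pairLf_eq hp, Finset.filter_insert, Finset.filter_singleton]
  cases hb1 : c ⟨pick G p, (pick_leaf hp).1⟩ <;>
    cases hb2 : c ⟨pick2 G p, (pick_leaf hp).2⟩ <;> cases b <;> simp_all

lemma filter_split_card {c : {v : V // G.degree v = 1} → Bool} (hg : goodC G c) (b : Bool) :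
    (Finset.univ.filter (fun l => c l = b)).card =
      (PF G).card + ((freeLfF G).filter (fun l => c l = b)).card := by
  have hsplit : (Finset.univ : Finset {v : V // G.degree v = 1}) =
      cherryLfF G ∪ freeLfF G := by
    rw [cherryLfF, freeLfF, Finset.filter_union_filter_not_eq]
  have hdisj : Disjoint (cherryLfF G) (freeLfF G) := by
    rw [Finset.disjoint_left]
    intro l h1 h2
    simp only [cherryLfF, freeLfF, Finset.mem_filter] at h1 h2
    exact h2.2 h1.2
  rw [hsplit, Finset.filter_union,
    Finset.card_union_of_disjoint (Finset.disjoint_filter_filter hdisj)]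
  congr 1
  rw [cherry_eq_biUnion, Finset.filter_biUnion,
    Finset.card_biUnion (fun p _ q _ h =>
      Finset.disjoint_filter_filter (pairLf_disjoint h))]
  rw [Finset.sum_congr rfl (fun p hp => pairLf_filter_card hg (mem_PF.mp hp) b)]
  simp

end count

section master
variable {V : Type*} [Fintype V] [DecidableEq V] {G : SimpleGraph V} [DecidableRel G.Adj]
set_option linter.unusedSectionVars false
variable (hconn : G.Connected) (hacyc : G.IsAcyclic)
  (hdeg : ∀ v, G.degree v = 1 ∨ G.degree v = 3)
  (hbig : 5 ≤ {v : V | G.degree v = 1}.ncard)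
include hconn hacyc hdeg hbig

lemma ncard_filter_eq (c : {v : V // G.degree v = 1} → Bool) (b : Bool) :
    {l : {v : V // G.degree v = 1} | c l = b}.ncard =
      (Finset.univ.filter (fun l => c l = b)).card := by
  rw [Set.ncard_eq_toFinset_card']
  congr 1
  ext l
  simp

lemma bicoloring_iff (d n : ℕ) (c : {v : V // G.degree v = 1} → Bool) :
    IsBicoloring G d n c ↔
      ((Finset.univ.filter (fun l => c l = true)).card = d ∧
       (Finset.univ.filter (fun l => c l = false)).card = n ∧ goodC G c) := by
  unfold IsBicoloring
  rw [ncard_filter_eq hconn hacyc hdeg hbig c true, ncard_filter_eq hconn hacyc hdeg hbig c false]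
  exact and_congr Iff.rfl (and_congr Iff.rfl (cond_iff hconn hacyc hdeg hbig c))

end master

section bij
variable {V : Type*} [Fintype V] [DecidableEq V] {G : SimpleGraph V} [DecidableRel G.Adj]
set_option linter.unusedSectionVars false

/-- inverse map of the counting bijection -/
noncomputable def jfun (G : SimpleGraph V) [DecidableRel G.Adj]
    (f : {p : V // p ∈ PF G} → Bool) (s : Finset {v : V // G.degree v = 1}) :
    {v : V // G.degree v = 1} → Bool := fun l =>
  if h : IsCP G (par G (l : V)) then
    (if (l : V) = pick G (par G (l : V)) then f ⟨par G (l : V), mem_PF.mpr h⟩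
     else ! f ⟨par G (l : V), mem_PF.mpr h⟩)
  else decide (l ∈ s)

lemma jfun_pick {p : V} (hp : IsCP G p) (f : {p : V // p ∈ PF G} → Bool)
    (s : Finset {v : V // G.degree v = 1}) :
    jfun G f s ⟨pick G p, (pick_leaf hp).1⟩ = f ⟨p, mem_PF.mpr hp⟩ := by
  have e1 : par G (pick G p) = p := (par_pick hp).1
  unfold jfun
  simp [e1, dif_pos hp]

lemma jfun_pick2 {p : V} (hp : IsCP G p) (f : {p : V // p ∈ PF G} → Bool)
    (s : Finset {v : V // G.degree v = 1}) :
    jfun G f s ⟨pick2 G p, (pick_leaf hp).2⟩ = ! f ⟨p, mem_PF.mpr hp⟩ := by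
  have e1 : par G (pick2 G p) = p := (par_pick hp).2
  unfold jfun
  simp only [e1, dif_pos hp]
  rw [if_neg]
  exact fun h => (pick_spec hp).2 h.symm

lemma jfun_free {l : {v : V // G.degree v = 1}} (hl : ¬ IsCP G (par G (l : V)))
    (f : {p : V // p ∈ PF G} → Bool) (s : Finset {v : V // G.degree v = 1}) :
    jfun G f s l = decide (l ∈ s) := by
  unfold jfun
  rw [dif_neg hl]

lemma jfun_good (f : {p : V // p ∈ PF G} → Bool) (s : Finset {v : V // G.degree v = 1}) :
    goodC G (jfun G f s) := by
  intro p hp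
  have h1 := jfun_pick hp f s
  have h2 := jfun_pick2 hp f s
  have hm1 : pick G p ∈ leafNbrs G p := (pick_spec hp).1 ▸ by simp
  have hm2 : pick2 G p ∈ leafNbrs G p := (pick_spec hp).1 ▸ by simp
  cases hf : f ⟨p, mem_PF.mpr hp⟩
  · rw [hf] at h1 h2
    exact ⟨⟨⟨pick2 G p, (pick_leaf hp).2⟩, hm2, by simp [h2]⟩,
           ⟨⟨pick G p, (pick_leaf hp).1⟩, hm1, h1⟩⟩
  · rw [hf] at h1 h2
    exact ⟨⟨⟨pick G p, (pick_leaf hp).1⟩, hm1, h1⟩,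
           ⟨⟨pick2 G p, (pick_leaf hp).2⟩, hm2, by simp [h2]⟩⟩

lemma mem_freeLfF {l : {v : V // G.degree v = 1}} :
    l ∈ freeLfF G ↔ ¬ IsCP G (par G (l : V)) := by simp [freeLfF]

lemma jfun_free_filter (f : {p : V // p ∈ PF G} → Bool)
    {s : Finset {v : V // G.degree v = 1}} (hs : s ⊆ freeLfF G) :
    (freeLfF G).filter (fun l => jfun G f s l = true) = s := by
  ext l
  simp only [Finset.mem_filter]
  constructor
  · rintro ⟨hfree, hj⟩
    rw [jfun_free (mem_freeLfF.mp hfree)] at hj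
    simpa using hj
  · intro hls
    have hfree := hs hls
    refine ⟨hfree, ?_⟩
    rw [jfun_free (mem_freeLfF.mp hfree)]
    simpa using hls

lemma j_of_i {c : {v : V // G.degree v = 1} → Bool} (hg : goodC G c) :
    jfun G (fun p => c ⟨pick G (p : V), (pick_leaf (mem_PF.mp p.2)).1⟩)
      ((freeLfF G).filter (fun l => c l = true)) = c := by
  funext l
  by_cases hcp : IsCP G (par G (l : V))
  · have hmem : (l : V) ∈ leafNbrs G (par G (l : V)) := (mem_leafNbrs_iff_par l.2 _).mpr rfl
    rw [(pick_spec hcp).1] at hmem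
    simp only [Finset.mem_insert, Finset.mem_singleton] at hmem
    rcases hmem with h | h
    · have hl : l = ⟨pick G (par G (l : V)), (pick_leaf hcp).1⟩ := Subtype.ext h
      rw [hl, jfun_pick hcp]
    · have hl : l = ⟨pick2 G (par G (l : V)), (pick_leaf hcp).2⟩ := Subtype.ext h
      rw [hl, jfun_pick2 hcp]
      have hne := good_ne hg hcp
      cases hb1 : c ⟨pick G (par G (l : V)), (pick_leaf hcp).1⟩ <;>
        cases hb2 : c ⟨pick2 G (par G (l : V)), (pick_leaf hcp).2⟩ <;>
        first
          | rfl
          | (exact absurd (hb1.trans hb2.symm) hne)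
  · rw [jfun_free hcp]
    have hfree : l ∈ freeLfF G := mem_freeLfF.mpr hcp
    by_cases hcl : c l = true
    · simp [Finset.mem_filter, hfree, hcl]
    · simp only [Bool.not_eq_true] at hcl
      simp [Finset.mem_filter, hcl]

lemma i_of_j (f : {p : V // p ∈ PF G} → Bool) (s : Finset {v : V // G.degree v = 1}) :
    (fun p : {p : V // p ∈ PF G} =>
      jfun G f s ⟨pick G (p : V), (pick_leaf (mem_PF.mp p.2)).1⟩) = f := by
  funext p
  rw [jfun_pick (mem_PF.mp p.2)]

end bij

section master2
variable {V : Type*} [Fintype V] [DecidableEq V] {G : SimpleGraph V} [DecidableRel G.Adj]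
set_option linter.unusedSectionVars false
variable (hconn : G.Connected) (hacyc : G.IsAcyclic)
  (hdeg : ∀ v, G.degree v = 1 ∨ G.degree v = 3)
include hconn hacyc hdeg

theorem master (d n k : ℕ) (hleaves : {v : V | G.degree v = 1}.ncard = d + n)
    (h5 : 5 ≤ d + n) (hk : (elementarySplitEdges G).ncard = k) :
    ((∃ c, IsBicoloring G d n c) ↔ k ≤ min d n) ∧
    (k ≤ min d n →
      {c : {v : V // G.degree v = 1} → Bool | IsBicoloring G d n c}.ncard =
        2 ^ k * Nat.choose (d + n - 2 * k) (d - k)) := by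
  have hbig : 5 ≤ {v : V | G.degree v = 1}.ncard := hleaves ▸ h5
  have hLf : Fintype.card {v : V // G.degree v = 1} = d + n := by
    rw [Fintype.card_subtype]
    rw [Set.ncard_eq_toFinset_card'] at hleaves
    rw [← hleaves]
    congr 1
    ext l
    simp
  have hPk : (PF G).card = k := by
    have h1 := ncard_CP_eq hconn hacyc hdeg hbig
    rw [hk] at h1
    rw [← h1, Set.ncard_eq_toFinset_card']
    congr 1
    ext p
    simp [PF]
  have hch : (cherryLfF G).card = 2 * k := by rw [cherry_card, hPk]
  have hfree : (freeLfF G).card + 2 * k = d + n := by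
    have h1 : (cherryLfF G).card + (freeLfF G).card =
        Fintype.card {v : V // G.degree v = 1} := by
      rw [← Finset.card_univ]
      exact Finset.card_filter_add_card_filter_not _
    omega
  have redgreen : ∀ c : {v : V // G.degree v = 1} → Bool,
      (Finset.univ.filter (fun l => c l = true)).card +
      (Finset.univ.filter (fun l => c l = false)).card = d + n := by
    intro c
    have h1 := Finset.card_filter_add_card_filter_not
      (s := (Finset.univ : Finset {v : V // G.degree v = 1}))
      (p := fun l => c l = true)
    simp only [Bool.not_eq_true] at h1
    rw [Finset.card_univ, hLf] at h1
    exact h1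
  have hsplit := fun (c : {v : V // G.degree v = 1} → Bool) (hg : goodC G c) b =>
    (filter_split_card hg b).trans (by rw [hPk])
  have hcount : k ≤ min d n →
      {c : {v : V // G.degree v = 1} → Bool | IsBicoloring G d n c}.ncard =
        2 ^ k * Nat.choose (d + n - 2 * k) (d - k) := by
    intro hmin
    have hkd : k ≤ d := le_trans hmin (min_le_left _ _)
    have hkn : k ≤ n := le_trans hmin (min_le_right _ _)
    set A := Finset.univ.filter (fun c : {v : V // G.degree v = 1} → Bool =>
      (Finset.univ.filter (fun l => c l = true)).card = d ∧
      (Finset.univ.filter (fun l => c l = false)).card = n ∧ goodC G c) with hA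
    have hsetA : {c : {v : V // G.degree v = 1} → Bool | IsBicoloring G d n c} = ↑A := by
      ext c
      simp only [Set.mem_setOf_eq, hA, Finset.coe_filter, Finset.mem_univ, true_and]
      exact bicoloring_iff hconn hacyc hdeg hbig d n c
    rw [hsetA, Set.ncard_coe_finset]
    set B := (Finset.univ : Finset ({p : V // p ∈ PF G} → Bool)) ×ˢ
      (freeLfF G).powersetCard (d - k) with hB
    have hAB : A.card = B.card := by
      apply Finset.card_bij'
        (i := fun c _ => ((fun p => c ⟨pick G (p : V), (pick_leaf (mem_PF.mp p.2)).1⟩),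
          (freeLfF G).filter (fun l => c l = true)))
        (j := fun fs _ => jfun G fs.1 fs.2)
      · -- i maps into B
        intro c hc
        rw [hA, Finset.mem_filter] at hc
        obtain ⟨-, hred, -, hgood⟩ := hc
        rw [hB, Finset.mem_product]
        refine ⟨Finset.mem_univ _, Finset.mem_powersetCard.mpr ⟨Finset.filter_subset _ _, ?_⟩⟩
        have h1 := hsplit c hgood true
        rw [hred] at h1
        dsimp only
        omega
      · -- j maps into A
        intro fs hfs
        rw [hB, Finset.mem_product, Finset.mem_powersetCard] at hfs
        obtain ⟨-, hsub, hcard⟩ := hfs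
        rw [hA, Finset.mem_filter]
        have hgood := jfun_good fs.1 fs.2
        have h1 := hsplit _ hgood true
        rw [jfun_free_filter fs.1 hsub, hcard] at h1
        have hredval : (Finset.univ.filter (fun l => jfun G fs.1 fs.2 l = true)).card = d := by
          omega
        have h2 := redgreen (jfun G fs.1 fs.2)
        refine ⟨Finset.mem_univ _, hredval, by omega, hgood⟩
      · -- left inverse
        intro c hc
        rw [hA, Finset.mem_filter] at hc
        exact j_of_i hc.2.2.2
      · -- right inverse
        intro fs hfs
        rw [hB, Finset.mem_product, Finset.mem_powersetCard] at hfs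
        obtain ⟨-, hsub, -⟩ := hfs
        exact Prod.ext (i_of_j fs.1 fs.2) (jfun_free_filter fs.1 hsub)
    rw [hAB, hB, Finset.card_product, Finset.card_univ, Fintype.card_fun, Fintype.card_coe,
      hPk, Finset.card_powersetCard]
    have hfc : (freeLfF G).card = d + n - 2 * k := by omega
    rw [hfc]
    rfl
  refine ⟨⟨?_, ?_⟩, hcount⟩
  · rintro ⟨c, hc⟩
    rw [bicoloring_iff hconn hacyc hdeg hbig] at hc
    obtain ⟨hred, hgreen, hgood⟩ := hc
    have h1 := hsplit c hgood true
    have h2 := hsplit c hgood false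
    rw [hred] at h1
    rw [hgreen] at h2
    simp only [le_min_iff]
    omega
  · intro hmin
    have hkd : k ≤ d := le_trans hmin (min_le_left _ _)
    have hkn : k ≤ n := le_trans hmin (min_le_right _ _)
    have hpos : 0 < 2 ^ k * Nat.choose (d + n - 2 * k) (d - k) := by
      apply Nat.mul_pos (pow_pos (by norm_num : (0:ℕ) < 2) _)
      exact Nat.choose_pos (by omega)
    have := hcount hmin
    by_contra hempty
    push_neg at hempty
    have hE : {c : {v : V // G.degree v = 1} → Bool | IsBicoloring G d n c} = ∅ := by
      ext c
      simp only [Set.mem_setOf_eq, Set.mem_empty_iff_false, iff_false]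
      exact hempty c
    rw [hE, Set.ncard_empty] at this
    omega

end master2

/-- **Proposition (number of bicolorings).** Let `G` be a maximal phylogenetic tree
with `d + n ≥ 5` leaves and `k` elementary splits. Then `G` admits a
`(d,n)`-bicoloring iff `k ≤ min d n`, in which case the number of `(d,n)`-bicolorings
is `2^k · C(d+n−2k, d−k)`. -/
theorem stmt_11 {V : Type*} [Fintype V] (G : SimpleGraph V) [DecidableRel G.Adj]
    (hconn : G.Connected) (hacyc : G.IsAcyclic)
    (hdeg : ∀ v, G.degree v = 1 ∨ G.degree v = 3)
    (d n k : ℕ) (hleaves : {v | G.degree v = 1}.ncard = d + n) (h5 : 5 ≤ d + n)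
    (hk : (elementarySplitEdges G).ncard = k) :
    ((∃ c, IsBicoloring G d n c) ↔ k ≤ min d n) ∧
    (k ≤ min d n →
      {c : {v : V // G.degree v = 1} → Bool | IsBicoloring G d n c}.ncard =
        2 ^ k * Nat.choose (d + n - 2 * k) (d - k)) := by
  letI : DecidableEq V := Classical.decEq V
  exact master hconn hacyc hdeg d n k hleaves h5 hk
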